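/- For every complex number s with Re s > −1 and s ≠ 1, ζ(s) = 1/(s−1) + 1/2 + (1/2) · ∑_{k=2}^{∞} ( (k−1) · (s)_k / (k+1)! ) · (ζ(s+k) − 1), where (s)_k is the ascending Pochhammer symbol. -/

import Mathlib

open Filter Topology Polynomial Complex

/-- recurrence -/
lemma poch_rec (s : ℂ) (k : ℕ) :
    (ascPochhammer ℂ (k+1)).eval s = (ascPochhammer ℂ k).eval s * (s + k) := by
  rw [ascPochhammer_succ_right]
  simp [Polynomial.eval_mul]

lemma poch_rec_real (M : ℝ) (k : ℕ) :
    (ascPochhammer ℝ (k+1)).eval M = (ascPochhammer ℝ k).eval M * (M + k) := by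
  rw [ascPochhammer_succ_right]
  simp [Polynomial.eval_mul]

lemma poch_pos {M : ℝ} (hM : 0 < M) (k : ℕ) : 0 < (ascPochhammer ℝ k).eval M := by
  induction k with
  | zero => simp
  | succ k ih => rw [poch_rec_real]; positivity

lemma poch_norm_le (s : ℂ) {M : ℝ} (hM : ‖s‖ + 1 ≤ M) (k : ℕ) :
    ‖(ascPochhammer ℂ k).eval s‖ ≤ (ascPochhammer ℝ k).eval M := by
  induction k with
  | zero => simp
  | succ k ih =>
    rw [poch_rec, poch_rec_real]
    have h1 : ‖s + (k:ℂ)‖ ≤ M + k := by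
      refine (norm_add_le _ _).trans ?_
      simp only [Complex.norm_natCast]
      linarith
    calc ‖(ascPochhammer ℂ k).eval s * (s + k)‖
        = ‖(ascPochhammer ℂ k).eval s‖ * ‖s + (k:ℂ)‖ := norm_mul _ _
      _ ≤ (ascPochhammer ℝ k).eval M * (M + k) := by
          apply mul_le_mul ih h1 (norm_nonneg _)
          exact le_of_lt (poch_pos (by have := norm_nonneg s; linarith) k)

/-- master summability -/
lemma summable_poch {M r : ℝ} (hM : 0 < M) (hr0 : 0 < r) (hr1 : r < 1) :
    Summable (fun k : ℕ ↦ (ascPochhammer ℝ k).eval M / k.factorial * r ^ k) := by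
  apply summable_of_ratio_test_tendsto_lt_one hr1
  · filter_upwards with n
    have := poch_pos hM n
    have : (0:ℝ) < (ascPochhammer ℝ n).eval M / n.factorial * r ^ n := by positivity
    exact ne_of_gt this
  · have key : ∀ n : ℕ, ‖(ascPochhammer ℝ (n+1)).eval M / (n+1).factorial * r ^ (n+1)‖ /
        ‖(ascPochhammer ℝ n).eval M / n.factorial * r ^ n‖ = (M + n) / (n+1) * r := by
      intro n
      have h1 := poch_pos hM n
      have h2 : (0:ℝ) < n.factorial := by positivity
      rw [poch_rec_real, Nat.factorial_succ]
      rw [Real.norm_eq_abs, Real.norm_eq_abs, abs_of_pos (by positivity), abs_of_pos (by positivity)]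
      field_simp
      push_cast
      ring
    simp_rw [key]
    have h1 : Tendsto (fun n : ℕ ↦ (M + n) / (n + 1)) atTop (𝓝 1) := by
      have := Filter.Tendsto.add_atTop (tendsto_const_nhds (x := M)) tendsto_natCast_atTop_atTop (α := ℝ)
      have h2 : Tendsto (fun n : ℕ ↦ ((M - 1) / (n + 1) + 1)) atTop (𝓝 (0 + 1)) := by
        apply Tendsto.add_const
        apply Tendsto.div_atTop tendsto_const_nhds
        exact tendsto_atTop_add_const_right _ 1 tendsto_natCast_atTop_atTop
      rw [zero_add] at h2
      apply h2.congr
      intro n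
      have : (n:ℝ) + 1 ≠ 0 := by positivity
      field_simp
      ring
    have := h1.mul_const r
    rwa [one_mul] at this


lemma binomial_hasSum (s : ℂ) {z : ℂ} (hz : ‖z‖ < 1) :
    HasSum (fun k : ℕ ↦ (ascPochhammer ℂ k).eval s / k.factorial * z ^ k)
      ((1 - z) ^ (-s)) := by
  set r : ℝ := (1 + ‖z‖) / 2 with hr
  have hzr : ‖z‖ < r := by rw [hr]; linarith
  have hr0 : 0 < r := lt_of_le_of_lt (norm_nonneg z) hzr
  have hr1 : r < 1 := by rw [hr]; linarith
  set M : ℝ := ‖s‖ + 1 with hM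
  have hM0 : 0 < M := by have := norm_nonneg s; rw [hM]; linarith
  set U : Set ℂ := Metric.ball 0 r with hU
  have hUopen : IsOpen U := Metric.isOpen_ball
  set p : ℕ → ℂ := fun k ↦ (ascPochhammer ℂ k).eval s / k.factorial with hp
  set u : ℕ → ℝ := fun k ↦ (ascPochhammer ℝ k).eval M / k.factorial * r ^ k with hu
  have hu_sum : Summable u := summable_poch hM0 hr0 hr1
  set Fk : ℕ → ℂ → ℂ := fun k w ↦ p k * w ^ k with hFk
  have hb : ∀ k : ℕ, ∀ w ∈ U, ‖Fk k w‖ ≤ u k := by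
    intro k w hw
    have hwr : ‖w‖ ≤ r := by
      simpa [hU, Complex.dist_eq] using (Metric.mem_ball.mp hw).le
    have h1 : ‖Fk k w‖ = ‖(ascPochhammer ℂ k).eval s‖ / k.factorial * ‖w‖ ^ k := by
      simp [hFk, hp]
    rw [h1, hu]
    have hfac : (0:ℝ) < k.factorial := by positivity
    apply mul_le_mul
    · exact (div_le_div_iff_of_pos_right hfac).mpr (poch_norm_le s (le_refl M) k)
    · exact pow_le_pow_left₀ (norm_nonneg w) hwr k
    · positivity
    · exact div_nonneg (poch_pos hM0 k).le hfac.le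
  have hdiff : ∀ k : ℕ, DifferentiableOn ℂ (Fk k) U := by
    intro k
    apply Differentiable.differentiableOn
    exact (differentiable_pow k).const_mul _
  set F : ℂ → ℂ := fun w ↦ ∑' k, Fk k w with hF
  have hFd : DifferentiableOn ℂ F U :=
    differentiableOn_tsum_of_summable_norm hu_sum hdiff hUopen hb
  have hsum : ∀ w ∈ U, HasSum (fun k ↦ Fk k w) (F w) := by
    intro w hw
    exact (Summable.of_norm (Summable.of_nonneg_of_le (fun k => norm_nonneg _)
      (fun k => hb k w hw) hu_sum)).hasSum
  have hD : ∀ (k : ℕ) (w : ℂ), deriv (Fk k) w = p k * (k * w ^ (k-1)) :=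
    fun k w => ((hasDerivAt_pow k w).const_mul (p k)).deriv
  have hderiv : ∀ w ∈ U, HasSum (fun k : ℕ ↦ p k * (k * w ^ (k-1))) (deriv F w) := by
    intro w hw
    have h := hasSum_deriv_of_summable_norm hu_sum hdiff hUopen hb hw
    simpa [hD] using h
  have ode : ∀ w ∈ U, (1 - w) * deriv F w = s * F w := by
    intro w hw
    have h0 : HasSum (fun k : ℕ ↦ p (k+1) * ((k+1 : ℕ) * w ^ (k+1-1))) (deriv F w) := by
      refine (hasSum_nat_add_iff (f := fun k : ℕ ↦ p k * (k * w ^ (k-1))) 1).mpr ?_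
      simpa using hderiv w hw
    have h0' : HasSum (fun k : ℕ ↦ ((s + k) * p k) * w ^ k) (deriv F w) := by
      have e : (fun k : ℕ ↦ ((s + (k:ℂ)) * p k) * w ^ k)
          = (fun k : ℕ ↦ p (k+1) * ((k+1 : ℕ) * w ^ (k+1-1))) := by
        funext k
        simp only [Nat.add_sub_cancel, hp, poch_rec, Nat.factorial_succ]
        push_cast
        have h1 : (k:ℂ) + 1 ≠ 0 := by exact_mod_cast (Nat.cast_ne_zero (R := ℂ)).mpr k.succ_ne_zero
        have h2 : (k.factorial : ℂ) ≠ 0 := by exact_mod_cast (Nat.factorial_pos k).ne'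
        field_simp
      rw [e]; exact h0
    have h2 : HasSum (fun k : ℕ ↦ ((k:ℂ) * p k) * w ^ k) (w * deriv F w) := by
      have h := (hderiv w hw).mul_left w
      have e : (fun k : ℕ ↦ ((k:ℂ) * p k) * w ^ k)
          = (fun k : ℕ ↦ w * (p k * (k * w ^ (k-1)))) := by
        funext k
        cases k with
        | zero => simp
        | succ j => simp only [Nat.add_sub_cancel]; push_cast; ring
      rw [e]; exact h
    have h3 : HasSum (fun k : ℕ ↦ s * (Fk k w)) (deriv F w - w * deriv F w) := by
      have h := h0'.sub h2
      have e : (fun k : ℕ ↦ s * (Fk k w))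
          = (fun k : ℕ ↦ ((s + (k:ℂ)) * p k) * w ^ k - ((k:ℂ) * p k) * w ^ k) := by
        funext k; simp only [hFk]; ring
      rw [e]; exact h
    have h4 : HasSum (fun k : ℕ ↦ s * (Fk k w)) (s * F w) := (hsum w hw).mul_left s
    have := h3.unique h4
    linear_combination this
  set G : ℂ → ℂ := fun w ↦ F w * (1 - w) ^ s with hG
  have hslit : ∀ w ∈ U, 0 < (1 - w).re := by
    intro w hw
    have hwr : ‖w‖ < r := by simpa [hU, Complex.dist_eq] using hw
    have h1 : w.re ≤ ‖w‖ := (le_abs_self _).trans (Complex.abs_re_le_norm w)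
    simp only [Complex.sub_re, Complex.one_re]
    linarith
  have hGderiv : ∀ w ∈ U, HasDerivAt G 0 w := by
    intro w hw
    have hne : (1 : ℂ) - w ≠ 0 := by
      intro h; have h2 := hslit w hw; rw [h] at h2; simp at h2
    have hF' : HasDerivAt F (deriv F w) w := (hFd.differentiableAt (hUopen.mem_nhds hw)).hasDerivAt
    have hin : HasDerivAt (fun w : ℂ ↦ 1 - w) (-1) w := (hasDerivAt_id w).const_sub 1
    have hpw : HasDerivAt (fun w : ℂ ↦ (1 - w) ^ s) (s * (1-w)^(s-1) * (-1)) w :=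
      hin.cpow_const (Or.inl (hslit w hw))
    have h := hF'.mul hpw
    convert h using 1
    · rfl
    · rfl
    · rfl
    have hcp : (1-w) ^ s = (1-w)^(s-1) * (1-w) := by
      have : (1-w) ^ (s - 1 + 1) = (1-w)^(s-1) * (1-w)^(1:ℂ) := Complex.cpow_add _ _ hne
      rw [sub_add_cancel, Complex.cpow_one] at this
      exact this
    linear_combination (-(1-w)^(s-1)) * ode w hw + (-(deriv F w)) * hcp
  have hGdiff : DifferentiableOn ℂ G U := fun w hw =>
    ((hGderiv w hw).differentiableAt).differentiableWithinAt
  have hfz : ∀ w ∈ U, fderivWithin ℂ G U w = 0 := by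
    intro w hw
    rw [fderivWithin_of_isOpen hUopen hw, (hGderiv w hw).hasFDerivAt.fderiv]
    ext y; simp
  have h0U : (0:ℂ) ∈ U := by simp [hU, hr0]
  have hzU : z ∈ U := by simpa [hU, Complex.dist_eq] using hzr
  have hconst : G z = G 0 := (convex_ball 0 r).is_const_of_fderivWithin_eq_zero hGdiff hfz hzU h0U
  have hF0 : F 0 = 1 := by
    have : F 0 = Fk 0 0 := by
      apply tsum_eq_single
      intro k hk
      simp [hFk, zero_pow hk]
    rw [this]; simp [hFk, hp]
  have hG0 : G 0 = 1 := by
    simp [hG, hF0]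
  have h1 : F z * (1 - z) ^ s = 1 := hconst.trans hG0
  have hFz : F z = (1 - z) ^ (-s) := by
    rw [Complex.cpow_neg]
    exact eq_inv_of_mul_eq_one_left (by linear_combination h1)
  exact hFz ▸ hsum z hzU


lemma poch_left (s : ℂ) (k : ℕ) :
    (ascPochhammer ℂ (k+1)).eval (s-1) = (s-1) * (ascPochhammer ℂ k).eval s := by
  rw [ascPochhammer_succ_left]
  simp [Polynomial.eval_comp, sub_add_cancel]

lemma inner_hasSum (s : ℂ) (hs1 : s ≠ 1) {x : ℝ} (hx0 : 0 < x) (hx1 : x < 1) :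
    HasSum (fun k : ℕ ↦ ((k:ℂ)+1) * (ascPochhammer ℂ (k+2)).eval s / ((k+3).factorial : ℂ)
        * (x:ℂ)^(k+2))
      ((1 - (x:ℂ))^(-s) + 1 - 2 * ((1 - (x:ℂ))^(1-s) - 1) / ((s-1) * (x:ℂ))) := by
  have hxn : ‖(x:ℂ)‖ < 1 := by
    rw [Complex.norm_real, Real.norm_eq_abs, abs_of_pos hx0]; exact hx1
  set P : ℕ → ℂ := fun k ↦ (ascPochhammer ℂ k).eval s with hP
  have HA : HasSum (fun k : ℕ ↦ P k / k.factorial * (x:ℂ)^k) ((1-(x:ℂ))^(-s)) :=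
    binomial_hasSum s hxn
  have HB0 := binomial_hasSum (s-1) hxn
  have HB1 : HasSum (fun k : ℕ ↦ (ascPochhammer ℂ (k+1)).eval (s-1) / ((k+1).factorial : ℂ)
      * (x:ℂ)^(k+1)) ((1-(x:ℂ))^(-(s-1)) - 1) := by
    refine (hasSum_nat_add_iff
      (f := fun k : ℕ ↦ (ascPochhammer ℂ k).eval (s-1) / (k.factorial : ℂ) * (x:ℂ)^k) 1).mpr ?_
    convert HB0 using 1
    · rfl
    simp
  have HB2 : HasSum (fun k : ℕ ↦ ((s-1) * (x:ℂ)) * (P k / ((k+1).factorial : ℂ) * (x:ℂ)^k))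
      ((1-(x:ℂ))^(1-s) - 1) := by
    have e : (fun k : ℕ ↦ ((s-1) * (x:ℂ)) * (P k / ((k+1).factorial : ℂ) * (x:ℂ)^k))
        = (fun k : ℕ ↦ (ascPochhammer ℂ (k+1)).eval (s-1) / ((k+1).factorial : ℂ) * (x:ℂ)^(k+1)) := by
      funext k; rw [poch_left]; ring
    rw [e, show (1:ℂ)-s = -(s-1) by ring]
    exact HB1
  have hc0 : (s-1) * (x:ℂ) ≠ 0 :=
    mul_ne_zero (sub_ne_zero.mpr hs1) (Complex.ofReal_ne_zero.mpr hx0.ne')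
  set B : ℂ := ((1-(x:ℂ))^(1-s) - 1) / ((s-1) * (x:ℂ)) with hB
  have HB : HasSum (fun k : ℕ ↦ P k / ((k+1).factorial : ℂ) * (x:ℂ)^k) B := by
    have hS : ((s-1)*(x:ℂ)) * B = (1-(x:ℂ))^(1-s) - 1 := by
      rw [hB]; field_simp [Complex.ofReal_ne_zero.mpr hx0.ne']
    rw [← hS] at HB2
    exact (hasSum_mul_left_iff hc0).mp HB2
  have HAB : HasSum (fun k : ℕ ↦ P k / (k.factorial : ℂ) * (x:ℂ)^k
      - 2 * (P k / ((k+1).factorial : ℂ) * (x:ℂ)^k)) ((1-(x:ℂ))^(-s) - 2*B) :=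
    HA.sub (HB.mul_left 2)
  have key : HasSum (fun k : ℕ ↦ P (k+2) / ((k+2).factorial : ℂ) * (x:ℂ)^(k+2)
      - 2 * (P (k+2) / ((k+3).factorial : ℂ) * (x:ℂ)^(k+2)))
      ((1-(x:ℂ))^(-s) - 2*B + 1) := by
    refine (hasSum_nat_add_iff
      (f := fun k : ℕ ↦ P k / (k.factorial : ℂ) * (x:ℂ)^k
        - 2 * (P k / ((k+1).factorial : ℂ) * (x:ℂ)^k)) 2).mpr ?_
    convert HAB using 1
    · rfl
    have hP0 : P 0 = 1 := by simp [hP]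
    have hP1 : P 1 = s := by simp [hP, ascPochhammer_one]
    rw [Finset.sum_range_succ, Finset.sum_range_one, hP0, hP1]
    norm_num
    ring
  have e : (fun k : ℕ ↦ ((k:ℂ)+1) * (ascPochhammer ℂ (k+2)).eval s / ((k+3).factorial : ℂ)
        * (x:ℂ)^(k+2))
      = (fun k : ℕ ↦ P (k+2) / ((k+2).factorial : ℂ) * (x:ℂ)^(k+2)
      - 2 * (P (k+2) / ((k+3).factorial : ℂ) * (x:ℂ)^(k+2))) := by
    funext k
    have hf3 : ((k+3).factorial : ℂ) = ((k+3 : ℕ) : ℂ) * ((k+2).factorial : ℂ) := by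
      rw [show k+3 = (k+2)+1 by ring, Nat.factorial_succ]; push_cast; ring
    have h2 : ((k+2).factorial : ℂ) ≠ 0 := by exact_mod_cast (Nat.factorial_pos (k+2)).ne'
    have h3 : ((k+3 : ℕ) : ℂ) ≠ 0 := by exact_mod_cast (Nat.succ_ne_zero (k+2))
    have h3' : (k:ℂ)+3 ≠ 0 := by exact_mod_cast (Nat.succ_ne_zero (k+2))
    rw [hP, hf3]
    push_cast
    field_simp [h2, h3']
    ring
  rw [e]
  convert key using 1
  rw [hB]
  ring


lemma per_n (s : ℂ) (hs1 : s ≠ 1) (n : ℕ) :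
    HasSum (fun k : ℕ ↦ ((k:ℂ)+1) * (ascPochhammer ℂ (k+2)).eval s / ((k+3).factorial : ℂ)
        * ((n:ℂ)+2) ^ (-s - (k:ℂ) - 2))
      (((n:ℂ)+1)^(-s) + ((n:ℂ)+2)^(-s)
        - 2 * ((((n:ℂ)+1)^(1-s) - ((n:ℂ)+2)^(1-s)) / (s-1))) := by
  have hy : (0:ℝ) < (n:ℝ)+2 := by positivity
  set x : ℝ := 1/((n:ℝ)+2) with hxdef
  have hx0 : 0 < x := by positivity
  have hx1 : x < 1 := by
    rw [hxdef, div_lt_one hy]; linarith [Nat.cast_nonneg (α := ℝ) n]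
  have hne2 : ((n:ℂ)+2) ≠ 0 := by
    intro h
    have := congrArg Complex.re h
    simp at this
    linarith [Nat.cast_nonneg (α := ℝ) n]
  have hxc : (x:ℂ) = ((n:ℂ)+2)⁻¹ := by
    rw [hxdef]; push_cast; rw [one_div]
  have h1mx : (1:ℂ) - (x:ℂ) = ((1 - x : ℝ) : ℂ) := by push_cast; ring
  have hmul : ∀ w : ℂ, ((n:ℂ)+1)^w = ((n:ℂ)+2)^w * (1-(x:ℂ))^w := by
    intro w
    have hr : ((n:ℝ)+2) * (1-x) = (n:ℝ)+1 := by
      rw [hxdef]; field_simp; ring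
    have hc := Complex.mul_cpow_ofReal_nonneg hy.le (by nlinarith : (0:ℝ) ≤ 1 - x) w
    rw [← Complex.ofReal_mul, hr] at hc
    rw [h1mx]
    rw [show ((n:ℂ)+1) = ((( (n:ℝ)+1 ):ℝ):ℂ) by push_cast; ring,
        show ((n:ℂ)+2) = ((( (n:ℝ)+2 ):ℝ):ℂ) by push_cast; ring]
    exact hc
  have hsne : s - 1 ≠ 0 := sub_ne_zero.mpr hs1
  have H := (inner_hasSum s hs1 hx0 hx1).mul_left (((n:ℂ)+2)^(-s))
  have e : (fun k : ℕ ↦ ((k:ℂ)+1) * (ascPochhammer ℂ (k+2)).eval s / ((k+3).factorial : ℂ)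
        * ((n:ℂ)+2) ^ (-s - (k:ℂ) - 2))
      = (fun k : ℕ ↦ (((n:ℂ)+2)^(-s)) * (((k:ℂ)+1) * (ascPochhammer ℂ (k+2)).eval s
        / ((k+3).factorial : ℂ) * (x:ℂ)^(k+2))) := by
    funext k
    have h1 : ((n:ℂ)+2) ^ (-s - (k:ℂ) - 2)
        = ((n:ℂ)+2)^(-s) * ((n:ℂ)+2)^(-((k:ℂ)+2)) := by
      rw [← Complex.cpow_add _ _ hne2]; ring_nf
    have h2 : ((n:ℂ)+2)^(-((k:ℂ)+2)) = (x:ℂ)^(k+2) := by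
      rw [Complex.cpow_neg, show ((k:ℂ)+2) = ((k+2 : ℕ):ℂ) by push_cast; ring,
        Complex.cpow_natCast, hxc, inv_pow]
    rw [h1, h2]; ring
  rw [e]
  convert H using 1
  · rfl
  -- sum value equality
  have e1 : (1-(x:ℂ))^(-s) = ((n:ℂ)+1)^(-s) * (((n:ℂ)+2)^(-s))⁻¹ := by
    rw [hmul (-s)]
    have : ((n:ℂ)+2)^(-s) ≠ 0 := by
      rw [Ne, Complex.cpow_eq_zero_iff]; tauto
    field_simp
  have hpow1 : ((n:ℂ)+2)^(1-s) = ((n:ℂ)+2) * ((n:ℂ)+2)^(-s) := by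
    rw [show (1:ℂ)-s = 1 + -s by ring, Complex.cpow_add _ _ hne2, Complex.cpow_one]
  have hpow2 : ((n:ℂ)+1)^(1-s) = ((n:ℂ)+2)^(1-s) * (1-(x:ℂ))^(1-s) := hmul (1-s)
  have hnz : ((n:ℂ)+2)^(-s) ≠ 0 := by
    rw [Ne, Complex.cpow_eq_zero_iff]; tauto
  rw [hxc] at *
  rw [e1, hpow2, hpow1]
  field_simp


private lemma coef_le (k : ℕ) {E F : ℝ} (hE : 0 ≤ E) (hF : 0 < F) :
    ((k:ℝ)+1) * E / (((k:ℝ)+3) * F) * (1/2:ℝ)^k ≤ 4 * (E / F * (1/2:ℝ)^(k+2)) := by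
  have h2 : (0:ℝ) < (1/2:ℝ)^k := by positivity
  rw [show (4:ℝ) * (E/F*(1/2:ℝ)^(k+2)) = E/F*(1/2)^k by ring]
  apply mul_le_mul_of_nonneg_right _ h2.le
  rw [div_le_div_iff₀ (by positivity) hF]
  nlinarith

/-- coefficient summability -/
lemma summable_coef {M : ℝ} (hM : 0 < M) :
    Summable (fun k : ℕ ↦ ((k:ℝ)+1) * (ascPochhammer ℝ (k+2)).eval M / ((k+3).factorial : ℝ)
      * (1/2)^k) := by
  have hq : Summable (fun k : ℕ ↦ (ascPochhammer ℝ k).eval M / k.factorial * (1/2 : ℝ) ^ k) :=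
    summable_poch hM (by norm_num) (by norm_num)
  have hq2 : Summable (fun k : ℕ ↦
      (ascPochhammer ℝ (k+2)).eval M / (k+2).factorial * (1/2 : ℝ) ^ (k+2)) :=
    (summable_nat_add_iff 2).mpr hq
  apply Summable.of_nonneg_of_le _ _ (hq2.mul_left 4)
  · intro k
    have h1 := (poch_pos hM (k+2)).le
    positivity
  · intro k
    have h1' := (poch_pos hM (k+2)).le
    have hf3 : ((k+3).factorial : ℝ) = ((k:ℝ)+3) * ((k+2).factorial : ℝ) := by
      rw [show k+3 = (k+2)+1 by ring, Nat.factorial_succ]; push_cast; ring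
    have hf2 : (0:ℝ) < ((k+2).factorial : ℝ) := by positivity
    rw [hf3]
    exact coef_le k h1' hf2

lemma zeta_ofnat_hasSum (w : ℂ) (hw : 1 < w.re) :
    HasSum (fun n : ℕ ↦ ((n:ℂ)+1)^(-w)) (riemannZeta w) := by
  have h := Complex.summable_one_div_nat_cpow.mpr hw
  have h2 := (summable_nat_add_iff (f := fun n : ℕ ↦ 1/(n:ℂ)^w) 1).mpr h
  have hsum : Summable (fun n : ℕ ↦ 1/((n:ℂ)+1)^w) := by
    refine h2.congr fun n => ?_
    norm_num
  have h1 : HasSum (fun n : ℕ ↦ 1/((n:ℂ)+1)^w) (riemannZeta w) := by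
    have := hsum.hasSum
    rwa [← zeta_eq_tsum_one_div_nat_add_one_cpow hw] at this
  have e : (fun n : ℕ ↦ ((n:ℂ)+1)^(-w)) = (fun n : ℕ ↦ 1/((n:ℂ)+1)^w) := by
    funext n
    rw [Complex.cpow_neg, one_div]
  rw [e]; exact h1

lemma zeta_tail (w : ℂ) (hw : 1 < w.re) :
    HasSum (fun n : ℕ ↦ ((n:ℂ)+2)^(-w)) (riemannZeta w - 1) := by
  have h1 := zeta_ofnat_hasSum w hw
  have hval : riemannZeta w - 1 + ∑ i ∈ Finset.range 1, ((i:ℂ)+1)^(-w) = riemannZeta w := by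
    rw [Finset.sum_range_one]
    norm_num
  have h3 : HasSum (fun n : ℕ ↦ (((n+1:ℕ):ℂ)+1)^(-w)) (riemannZeta w - 1) := by
    refine (hasSum_nat_add_iff (f := fun n : ℕ ↦ ((n:ℂ)+1)^(-w)) 1).mpr ?_
    rw [hval]; exact h1
  have e : (fun n : ℕ ↦ ((n:ℂ)+2)^(-w)) = (fun n : ℕ ↦ (((n+1:ℕ):ℂ)+1)^(-w)) := by
    funext n
    push_cast
    ring_nf
  rw [e]; exact h3

lemma zeta_tail_bound {σ : ℝ} (hσ : 1 < σ) :
    ∃ K : ℝ, 0 ≤ K ∧ ∀ w : ℂ, σ ≤ w.re → ‖riemannZeta w - 1‖ ≤ K * (2:ℝ)^(-w.re) := by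
  have hTsum : Summable (fun n : ℕ ↦ ((n:ℝ)+2)^(-σ)) := by
    have ha := (Real.summable_nat_rpow (p := -σ)).mpr (by linarith)
    have hb := (summable_nat_add_iff 2).mpr ha
    refine hb.congr fun n => ?_
    push_cast
    norm_num
  set T := ∑' n : ℕ, ((n:ℝ)+2)^(-σ) with hT
  have hT0 : 0 ≤ T := tsum_nonneg fun n => Real.rpow_nonneg (by positivity) _
  refine ⟨T * (2:ℝ)^(σ:ℝ), by positivity, ?_⟩
  intro w hwre
  have hw : 1 < w.re := lt_of_lt_of_le hσ hwre
  have htail := zeta_tail w hw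
  have hnorm : ∀ n : ℕ, ‖((n:ℂ)+2)^(-w)‖ = ((n:ℝ)+2)^(-w.re) := by
    intro n
    have hpos : (0:ℝ) < (n:ℝ)+2 := by positivity
    rw [show ((n:ℂ)+2) = (((n:ℝ)+2 : ℝ):ℂ) by push_cast; ring]
    rw [Complex.norm_cpow_eq_rpow_re_of_pos hpos]
    simp
  have hle : ∀ n : ℕ, ((n:ℝ)+2)^(-w.re) ≤ ((n:ℝ)+2)^(-σ) * (2:ℝ)^(σ - w.re) := by
    intro n
    have hpos : (0:ℝ) < (n:ℝ)+2 := by positivity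
    have hsplit : ((n:ℝ)+2)^(-w.re) = ((n:ℝ)+2)^(-σ) * ((n:ℝ)+2)^(σ - w.re) := by
      rw [← Real.rpow_add hpos]; ring_nf
    rw [hsplit]
    apply mul_le_mul_of_nonneg_left _ (Real.rpow_nonneg hpos.le _)
    have e1 : ((n:ℝ)+2)^(σ - w.re) = (((n:ℝ)+2)^(w.re - σ))⁻¹ := by
      rw [← Real.rpow_neg hpos.le]; ring_nf
    have e2 : (2:ℝ)^(σ - w.re) = ((2:ℝ)^(w.re - σ))⁻¹ := by
      rw [← Real.rpow_neg (by norm_num : (0:ℝ) ≤ 2)]; ring_nf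
    rw [e1, e2]
    apply inv_anti₀
    · exact Real.rpow_pos_of_pos (by norm_num) _
    · exact Real.rpow_le_rpow (by norm_num) (by linarith) (by linarith)
  have hsummable : Summable (fun n : ℕ ↦ ‖((n:ℂ)+2)^(-w)‖) := by
    refine Summable.of_nonneg_of_le (fun n => norm_nonneg _) (fun n => ?_)
      (hTsum.mul_right ((2:ℝ)^(σ - w.re)))
    rw [hnorm n]; exact hle n
  calc ‖riemannZeta w - 1‖ = ‖∑' n : ℕ, ((n:ℂ)+2)^(-w)‖ := by rw [htail.tsum_eq]
    _ ≤ ∑' n : ℕ, ‖((n:ℂ)+2)^(-w)‖ := norm_tsum_le_tsum_norm hsummable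
    _ ≤ ∑' n : ℕ, ((n:ℝ)+2)^(-σ) * (2:ℝ)^(σ - w.re) := by
        apply Summable.tsum_le_tsum _ hsummable (hTsum.mul_right _)
        intro n; rw [hnorm n]; exact hle n
    _ = T * (2:ℝ)^(σ-w.re) := by rw [tsum_mul_right]
    _ = T * (2:ℝ)^(σ:ℝ) * (2:ℝ)^(-w.re) := by
        rw [show σ - w.re = σ + (-w.re) by ring, Real.rpow_add (by norm_num : (0:ℝ) < 2)]
        ring

noncomputable def cc (s : ℂ) (k : ℕ) : ℂ :=
  ((k:ℂ)+1) * (ascPochhammer ℂ (k+2)).eval s / ((k+3).factorial : ℂ)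

lemma summable_shift {σ : ℝ} (hσ : 1 < σ) : Summable (fun n : ℕ ↦ ((n:ℝ)+2)^(-σ)) := by
  have ha := (Real.summable_nat_rpow (p := -σ)).mpr (by linarith)
  have hb := (summable_nat_add_iff 2).mpr ha
  refine hb.congr fun n => ?_
  push_cast
  norm_num

lemma cc_norm_le (s : ℂ) {M : ℝ} (hM : ‖s‖ + 1 ≤ M) (k : ℕ) :
    ‖cc s k‖ ≤ ((k:ℝ)+1) * (ascPochhammer ℝ (k+2)).eval M / ((k+3).factorial : ℝ) := by
  have e1 : ‖((k:ℂ)+1)‖ = (k:ℝ)+1 := by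
    rw [show ((k:ℂ)+1) = ((k+1:ℕ):ℂ) by push_cast; ring, Complex.norm_natCast]
    push_cast; ring
  have e2 : ‖(((k+3).factorial : ℕ):ℂ)‖ = ((k+3).factorial : ℝ) := Complex.norm_natCast _
  rw [cc, norm_div, norm_mul, e1, e2]
  have hf : (0:ℝ) < ((k+3).factorial : ℝ) := by positivity
  gcongr
  exact poch_norm_le s hM (k+2)

lemma main_gt_one (s : ℂ) (hs : 1 < s.re) :
    riemannZeta s =
      1 / (s - 1) + 1 / 2 +
        (1 / 2) * ∑' k : ℕ, (((k : ℂ) + 2) - 1) * (ascPochhammer ℂ (k + 2)).eval s /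
          ((k + 3).factorial : ℂ) * (riemannZeta (s + ((k : ℂ) + 2)) - 1) := by
  have hs1 : s ≠ 1 := by
    intro h; rw [h] at hs; simp at hs
  have hsne : s - 1 ≠ 0 := sub_ne_zero.mpr hs1
  have hM0 : (0:ℝ) < ‖s‖ + 1 := by positivity
  set F : ℕ × ℕ → ℂ := fun p ↦ cc s p.2 * ((p.1:ℂ)+2) ^ (-s - (p.2:ℂ) - 2) with hF
  have hFb : ∀ p : ℕ × ℕ, ‖F p‖ ≤ ((p.1:ℝ)+2)^(-s.re) *
      (((p.2:ℝ)+1) * (ascPochhammer ℝ (p.2+2)).eval (‖s‖+1) / ((p.2+3).factorial : ℝ)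
        * (1/2)^p.2) := by
    rintro ⟨n, k⟩
    have hpos : (0:ℝ) < (n:ℝ)+2 := by positivity
    have hnorm2 : ‖((n:ℂ)+2) ^ (-s - (k:ℂ) - 2)‖ = ((n:ℝ)+2)^(-s.re - (k:ℝ) - 2) := by
      rw [show ((n:ℂ)+2) = (((n:ℝ)+2 : ℝ):ℂ) by push_cast; ring]
      rw [Complex.norm_cpow_eq_rpow_re_of_pos hpos]
      congr 1
    have hsplit : ((n:ℝ)+2)^(-s.re - (k:ℝ) - 2)
        = ((n:ℝ)+2)^(-s.re) * (((n:ℝ)+2)^(-(k:ℝ)) * ((n:ℝ)+2)^(-(2:ℝ))) := by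
      rw [← Real.rpow_add hpos, ← Real.rpow_add hpos]; ring_nf
    have h2k : ((n:ℝ)+2)^(-(k:ℝ)) ≤ (1/2:ℝ)^k := by
      rw [Real.rpow_neg hpos.le, Real.rpow_natCast]
      have hb : (2:ℝ)^k ≤ ((n:ℝ)+2)^k := pow_le_pow_left₀ (by norm_num) (by linarith) k
      calc (((n:ℝ)+2)^k)⁻¹ ≤ ((2:ℝ)^k)⁻¹ := inv_anti₀ (by positivity) hb
        _ = (1/2:ℝ)^k := by rw [one_div, inv_pow]
    have h22 : ((n:ℝ)+2)^(-(2:ℝ)) ≤ 1 :=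
      Real.rpow_le_one_of_one_le_of_nonpos (by linarith) (by norm_num)
    have hccb := cc_norm_le s (le_refl (‖s‖+1)) k
    have hccpos : (0:ℝ) ≤ ((k:ℝ)+1) * (ascPochhammer ℝ (k+2)).eval (‖s‖+1)
        / ((k+3).factorial : ℝ) := by
      have := (poch_pos hM0 (k+2)).le
      positivity
    calc ‖F (n,k)‖ = ‖cc s k‖ * ((n:ℝ)+2)^(-s.re - (k:ℝ) - 2) := by
          rw [hF]; rw [norm_mul, hnorm2]
      _ = ‖cc s k‖ * (((n:ℝ)+2)^(-s.re) * (((n:ℝ)+2)^(-(k:ℝ)) * ((n:ℝ)+2)^(-(2:ℝ)))) := by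
          rw [hsplit]
      _ ≤ ‖cc s k‖ * (((n:ℝ)+2)^(-s.re) * ((1/2:ℝ)^k * 1)) := by
          gcongr
      _ ≤ (((k:ℝ)+1) * (ascPochhammer ℝ (k+2)).eval (‖s‖+1) / ((k+3).factorial : ℝ))
            * (((n:ℝ)+2)^(-s.re) * ((1/2:ℝ)^k * 1)) := by
          apply mul_le_mul_of_nonneg_right hccb
          have := Real.rpow_nonneg hpos.le (-s.re)
          positivity
      _ = ((n:ℝ)+2)^(-s.re) * (((k:ℝ)+1) * (ascPochhammer ℝ (k+2)).eval (‖s‖+1)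
            / ((k+3).factorial : ℝ) * (1/2:ℝ)^k) := by ring
  have hFnorm_sum : Summable (fun p : ℕ × ℕ ↦ ‖F p‖) := by
    refine Summable.of_nonneg_of_le (fun p => norm_nonneg _) hFb ?_
    apply Summable.mul_of_nonneg (summable_shift hs) (summable_coef hM0)
    · intro n; exact Real.rpow_nonneg (by positivity) _
    · intro k
      have := (poch_pos hM0 (k+2)).le
      positivity
  have hFsum : Summable F := Summable.of_norm hFnorm_sum
  have claimA : ∀ k : ℕ, HasSum (fun n : ℕ ↦ F (n,k))
      (cc s k * (riemannZeta (s + ((k:ℂ)+2)) - 1)) := by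
    intro k
    have hre : 1 < (s + ((k:ℂ)+2)).re := by
      rw [Complex.add_re, show ((k:ℂ)+2).re = (k:ℝ)+2 by simp]
      have := Nat.cast_nonneg (α := ℝ) k
      linarith
    have h := (zeta_tail _ hre).mul_left (cc s k)
    have e : (fun n : ℕ ↦ F (n,k))
        = (fun n : ℕ ↦ cc s k * ((n:ℂ)+2)^(-(s + ((k:ℂ)+2)))) := by
      funext n
      show cc s k * ((n:ℂ)+2) ^ (-s - (k:ℂ) - 2) = cc s k * ((n:ℂ)+2)^(-(s + ((k:ℂ)+2)))
      rw [show -s - (k:ℂ) - 2 = -(s + ((k:ℂ)+2)) by ring]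
    rw [e]; exact h
  have claimB : ∀ n : ℕ, HasSum (fun k : ℕ ↦ F (n,k))
      (((n:ℂ)+1)^(-s) + ((n:ℂ)+2)^(-s)
        - 2 * ((((n:ℂ)+1)^(1-s) - ((n:ℂ)+2)^(1-s)) / (s-1))) := by
    intro n
    have e : (fun k : ℕ ↦ F (n,k)) = (fun k : ℕ ↦ ((k:ℂ)+1) * (ascPochhammer ℂ (k+2)).eval s
        / ((k+3).factorial : ℂ) * ((n:ℂ)+2) ^ (-s - (k:ℂ) - 2)) := by
      funext k
      show cc s k * ((n:ℂ)+2) ^ (-s - (k:ℂ) - 2) = _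
      rw [cc]
    rw [e]; exact per_n s hs1 n
  have hz1 := zeta_ofnat_hasSum s hs
  have hz2 := zeta_tail s hs
  have hvsum' : Summable (fun n : ℕ ↦ ((n:ℂ)+1)^(-s) + ((n:ℂ)+2)^(-s)
      - 2 * ((((n:ℂ)+1)^(1-s) - ((n:ℂ)+2)^(1-s)) / (s-1))) := by
    have h := hFsum.hasSum.prod_fiberwise (fun n => claimB n)
    exact h.summable
  have hts : Summable (fun n : ℕ ↦ (((n:ℂ)+1)^(1-s) - ((n:ℂ)+2)^(1-s)) / (s-1)) := by
    have h := ((hz1.summable.add hz2.summable).sub hvsum').div_const 2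
    refine h.congr fun n => ?_
    field_simp
    ring
  have hpart : ∀ N : ℕ, ∑ i ∈ Finset.range N,
      (((i:ℂ)+1)^(1-s) - ((i:ℂ)+2)^(1-s)) / (s-1)
      = 1/(s-1) - ((N:ℂ)+1)^(1-s)/(s-1) := by
    intro N
    have e : ∀ i : ℕ, (((i:ℂ)+1)^(1-s) - ((i:ℂ)+2)^(1-s)) / (s-1)
        = (fun m : ℕ ↦ ((m:ℂ)+1)^(1-s)/(s-1)) i - (fun m : ℕ ↦ ((m:ℂ)+1)^(1-s)/(s-1)) (i+1) := by
      intro i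
      simp only []
      push_cast
      rw [show ((i:ℂ)+1+1) = ((i:ℂ)+2) by ring]
      ring
    rw [Finset.sum_congr rfl (fun i _ => e i), Finset.sum_range_sub']
    simp [Complex.one_cpow]
  have hlim : Tendsto (fun N : ℕ ↦ ((N:ℂ)+1)^(1-s)/(s-1)) atTop (𝓝 0) := by
    rw [tendsto_zero_iff_norm_tendsto_zero]
    have hnorm : ∀ N : ℕ, ‖((N:ℂ)+1)^(1-s)/(s-1)‖ = ((N:ℝ)+1)^(1-s.re)/‖s-1‖ := by
      intro N
      rw [norm_div]
      congr 1
      rw [show ((N:ℂ)+1) = (((N:ℝ)+1:ℝ):ℂ) by push_cast; ring, 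
        Complex.norm_cpow_eq_rpow_re_of_pos (by positivity)]
      congr 1
    simp only [hnorm]
    have h1 : Tendsto (fun x : ℝ ↦ x^(-(s.re-1))) atTop (𝓝 0) :=
      tendsto_rpow_neg_atTop (by linarith)
    have h2 : Tendsto (fun N : ℕ ↦ (N:ℝ)+1) atTop atTop :=
      tendsto_atTop_add_const_right _ 1 tendsto_natCast_atTop_atTop
    have h3 := h1.comp h2
    have h4 : Tendsto (fun N : ℕ ↦ ((N:ℝ)+1)^(1-s.re)) atTop (𝓝 0) := by
      refine h3.congr fun N => ?_
      simp only [Function.comp]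
      congr 1
      ring
    have h5 := h4.div_const ‖s-1‖
    simpa using h5
  have htsum_t : HasSum (fun n : ℕ ↦ (((n:ℂ)+1)^(1-s) - ((n:ℂ)+2)^(1-s)) / (s-1)) (1/(s-1)) := by
    have h := hts.hasSum
    have h2 := h.tendsto_sum_nat
    simp only [hpart] at h2
    have h3 : Tendsto (fun N : ℕ ↦ 1/(s-1) - ((N:ℂ)+1)^(1-s)/(s-1)) atTop (𝓝 (1/(s-1))) := by
      have h4 := (tendsto_const_nhds (x := 1/(s-1)) (f := atTop (α := ℕ))).sub hlim
      simpa using h4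
    have h5 : ∑' n : ℕ, (((n:ℂ)+1)^(1-s) - ((n:ℂ)+2)^(1-s)) / (s-1) = 1/(s-1) :=
      tendsto_nhds_unique h2 h3
    rwa [h5] at h
  have hv : HasSum (fun n : ℕ ↦ ((n:ℂ)+1)^(-s) + ((n:ℂ)+2)^(-s)
      - 2 * ((((n:ℂ)+1)^(1-s) - ((n:ℂ)+2)^(1-s)) / (s-1)))
      (riemannZeta s + (riemannZeta s - 1) - 2 * (1/(s-1))) :=
    (hz1.add hz2).sub (htsum_t.mul_left 2)
  have hstep1 : ∑' k : ℕ, (((k:ℂ)+2)-1) * (ascPochhammer ℂ (k+2)).eval s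
      / ((k+3).factorial : ℂ) * (riemannZeta (s + ((k:ℂ)+2)) - 1)
      = ∑' k : ℕ, cc s k * (riemannZeta (s + ((k:ℂ)+2)) - 1) := by
    apply tsum_congr; intro k; rw [cc]; ring
  have hstep2 : ∑' k : ℕ, cc s k * (riemannZeta (s + ((k:ℂ)+2)) - 1)
      = ∑' k : ℕ, ∑' n : ℕ, F (n,k) :=
    tsum_congr fun k => ((claimA k).tsum_eq).symm
  have hswap : ∑' k : ℕ, ∑' n : ℕ, F (n,k) = ∑' n : ℕ, ∑' k : ℕ, F (n,k) :=
    Summable.tsum_comm (f := fun n k : ℕ ↦ F (n,k)) hFsum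
  have hstep3 : ∑' n : ℕ, ∑' k : ℕ, F (n,k)
      = riemannZeta s + (riemannZeta s - 1) - 2 * (1/(s-1)) := by
    rw [tsum_congr (fun n => (claimB n).tsum_eq)]
    exact hv.tsum_eq
  rw [hstep1, hstep2, hswap, hstep3]
  ring


lemma Tfun_diffAt {s₀ : ℂ} (h : -1 < s₀.re) :
    DifferentiableAt ℂ (fun s : ℂ ↦ ∑' k : ℕ, (((k:ℂ)+2)-1) * (ascPochhammer ℂ (k+2)).eval s /
      ((k+3).factorial : ℂ) * (riemannZeta (s + ((k:ℂ)+2)) - 1)) s₀ := by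
  set ρ : ℝ := (s₀.re + 1)/2 with hρdef
  have hρ : 0 < ρ := by rw [hρdef]; linarith
  set σ₀ : ℝ := s₀.re - ρ with hσ₀def
  have hσ : 1 < σ₀ + 2 := by rw [hσ₀def, hρdef]; linarith
  obtain ⟨K, hK0, hK⟩ := zeta_tail_bound hσ
  set M : ℝ := ‖s₀‖ + ρ + 1 with hMdef
  have hM0 : 0 < M := by have := norm_nonneg s₀; rw [hMdef]; linarith
  set U := Metric.ball s₀ ρ with hU
  have hM : ∀ s ∈ U, ‖s‖ + 1 ≤ M := by
    intro s hsU
    have h1 : ‖s - s₀‖ < ρ := by simpa [hU, Complex.dist_eq] using hsU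
    have h2 : ‖s‖ ≤ ‖s₀‖ + ‖s - s₀‖ := by
      calc ‖s‖ = ‖s₀ + (s - s₀)‖ := by ring_nf
        _ ≤ ‖s₀‖ + ‖s - s₀‖ := norm_add_le _ _
    rw [hMdef]; linarith
  have hres : ∀ s ∈ U, σ₀ < s.re := by
    intro s hsU
    have h1 : ‖s - s₀‖ < ρ := by simpa [hU, Complex.dist_eq] using hsU
    have h2 : |(s - s₀).re| ≤ ‖s - s₀‖ := Complex.abs_re_le_norm _
    rw [Complex.sub_re] at h2
    have h3 : s₀.re - s.re ≤ |s.re - s₀.re| := by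
      rw [abs_sub_comm]; exact le_abs_self _
    rw [hσ₀def]; linarith
  set u : ℕ → ℝ := fun k ↦ ((k:ℝ)+1) * (ascPochhammer ℝ (k+2)).eval M / ((k+3).factorial : ℝ)
    * (1/2)^k * (K * (2:ℝ)^(-(σ₀+2))) with hu_def
  have hu : Summable u := (summable_coef hM0).mul_right _
  have hre_term : ∀ k : ℕ, ∀ s ∈ U, σ₀ + 2 ≤ (s + ((k:ℂ)+2)).re := by
    intro k s hsU
    rw [Complex.add_re, show ((k:ℂ)+2).re = (k:ℝ)+2 by simp]
    have := Nat.cast_nonneg (α := ℝ) k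
    have := hres s hsU
    linarith
  have hbound : ∀ k : ℕ, ∀ s ∈ U, ‖(((k:ℂ)+2)-1) * (ascPochhammer ℂ (k+2)).eval s /
      ((k+3).factorial : ℂ) * (riemannZeta (s + ((k:ℂ)+2)) - 1)‖ ≤ u k := by
    intro k s hsU
    have e1 : ‖((k:ℂ)+2-1)‖ = (k:ℝ)+1 := by
      rw [show ((k:ℂ)+2-1) = ((k+1:ℕ):ℂ) by push_cast; ring, Complex.norm_natCast]
      push_cast; ring
    have e2 : ‖(((k+3).factorial : ℕ):ℂ)‖ = ((k+3).factorial : ℝ) := Complex.norm_natCast _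
    have hzb : ‖riemannZeta (s + ((k:ℂ)+2)) - 1‖ ≤ K * (2:ℝ)^(-(σ₀+(k:ℝ)+2)) := by
      refine (hK _ (hre_term k s hsU)).trans ?_
      apply mul_le_mul_of_nonneg_left _ hK0
      apply Real.rpow_le_rpow_of_exponent_le (by norm_num)
      have := hre_term k s hsU
      rw [Complex.add_re, show ((k:ℂ)+2).re = (k:ℝ)+2 by simp] at this ⊢
      have := hres s hsU
      linarith
    have hsplit : (2:ℝ)^(-(σ₀+(k:ℝ)+2)) = (2:ℝ)^(-(σ₀+2)) * (1/2:ℝ)^k := by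
      rw [show -(σ₀+(k:ℝ)+2) = -(σ₀+2) + (-(k:ℝ)) by ring,
        Real.rpow_add (by norm_num : (0:ℝ) < 2)]
      congr 1
      rw [Real.rpow_neg (by norm_num : (0:ℝ) ≤ 2), Real.rpow_natCast, one_div, inv_pow]
    have hpn := (poch_norm_le s (hM s hsU) (k+2))
    have hpp := (poch_pos hM0 (k+2)).le
    calc ‖(((k:ℂ)+2)-1) * (ascPochhammer ℂ (k+2)).eval s / ((k+3).factorial : ℂ)
          * (riemannZeta (s + ((k:ℂ)+2)) - 1)‖
        = ((k:ℝ)+1) * ‖(ascPochhammer ℂ (k+2)).eval s‖ / ((k+3).factorial : ℝ)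
          * ‖riemannZeta (s + ((k:ℂ)+2)) - 1‖ := by
          rw [norm_mul, norm_div, norm_mul, e1, e2]
      _ ≤ ((k:ℝ)+1) * (ascPochhammer ℝ (k+2)).eval M / ((k+3).factorial : ℝ)
          * (K * (2:ℝ)^(-(σ₀+(k:ℝ)+2))) := by
          apply mul_le_mul _ hzb (norm_nonneg _) _
          · gcongr
          · positivity
      _ = u k := by
          rw [hu_def]
          simp only []
          rw [hsplit]
          ring
  have hdiff : ∀ k : ℕ, DifferentiableOn ℂ (fun s : ℂ ↦ (((k:ℂ)+2)-1)
      * (ascPochhammer ℂ (k+2)).eval s / ((k+3).factorial : ℂ)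
      * (riemannZeta (s + ((k:ℂ)+2)) - 1)) U := by
    intro k
    intro s hsU
    apply DifferentiableAt.differentiableWithinAt
    have hz : DifferentiableAt ℂ (fun s : ℂ ↦ riemannZeta (s + ((k:ℂ)+2))) s := by
      have hne : s + ((k:ℂ)+2) ≠ 1 := by
        intro hcontra
        have := hre_term k s hsU
        rw [hcontra] at this
        simp at this
        linarith
      exact (differentiableAt_riemannZeta hne).comp s (differentiableAt_id.add_const _)
    have hpoly : DifferentiableAt ℂ (fun s : ℂ ↦ (ascPochhammer ℂ (k+2)).eval s) s :=
      (Polynomial.differentiable _).differentiableAt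
    exact (((hpoly.const_mul _).div_const _).mul (hz.sub_const 1))
  have hmem : s₀ ∈ U := by simp [hU, hρ]
  exact (differentiableOn_tsum_of_summable_norm hu hdiff Metric.isOpen_ball hbound).differentiableAt
    (Metric.isOpen_ball.mem_nhds hmem)

lemma V_facts :
    ∃ V : Set ℂ, IsOpen V ∧ IsPreconnected V ∧ (∀ z ∈ V, -1 < z.re ∧ z ≠ 1) ∧
      (∀ z : ℂ, -1 < z.re → z ≠ 1 → z ∈ V) ∧ (2:ℂ) ∈ V := by
  set S1 : Set ℂ := {z | -1 < z.re} ∩ {z | z.re < 1} with hS1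
  set S2 : Set ℂ := {z | 1 < z.re} with hS2
  set S3 : Set ℂ := {z | -1 < z.re} ∩ {z | 0 < z.im} with hS3
  set S4 : Set ℂ := {z | -1 < z.re} ∩ {z | z.im < 0} with hS4
  have ho1 : IsOpen S1 := ((isOpen_lt continuous_const Complex.continuous_re).inter
    (isOpen_lt Complex.continuous_re continuous_const))
  have ho2 : IsOpen S2 := isOpen_lt continuous_const Complex.continuous_re
  have ho3 : IsOpen S3 := ((isOpen_lt continuous_const Complex.continuous_re).inter
    (isOpen_lt continuous_const Complex.continuous_im))
  have ho4 : IsOpen S4 := ((isOpen_lt continuous_const Complex.continuous_re).inter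
    (isOpen_lt Complex.continuous_im continuous_const))
  have hc1 : IsPreconnected S1 :=
    ((convex_halfSpace_re_gt (-1)).inter (convex_halfSpace_re_lt 1)).isPreconnected
  have hc2 : IsPreconnected S2 := (convex_halfSpace_re_gt 1).isPreconnected
  have hc3 : IsPreconnected S3 :=
    ((convex_halfSpace_re_gt (-1)).inter (convex_halfSpace_im_gt 0)).isPreconnected
  have hc4 : IsPreconnected S4 :=
    ((convex_halfSpace_re_gt (-1)).inter (convex_halfSpace_im_lt 0)).isPreconnected
  have hp13 : IsPreconnected (S1 ∪ S3) := by
    apply IsPreconnected.union Complex.I _ _ hc1 hc3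
    · constructor <;> simp [hS1]
    · constructor <;> simp [hS3]
  have hp132 : IsPreconnected ((S1 ∪ S3) ∪ S2) := by
    apply IsPreconnected.union (2 + Complex.I) _ _ hp13 hc2
    · right
      constructor <;> norm_num [hS3]
    · norm_num [hS2]
  have hpV : IsPreconnected (((S1 ∪ S3) ∪ S2) ∪ S4) := by
    apply IsPreconnected.union (-Complex.I) _ _ hp132 hc4
    · left; left
      constructor <;> simp [hS1]
    · constructor <;> simp [hS4]
  refine ⟨((S1 ∪ S3) ∪ S2) ∪ S4, ((ho1.union ho3).union ho2).union ho4, hpV, ?_, ?_, ?_⟩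
  · rintro z (((⟨h1, h2⟩ | ⟨h1, h2⟩) | h1) | ⟨h1, h2⟩)
    · exact ⟨h1, fun h => by rw [h] at h2; simp at h2⟩
    · exact ⟨h1, fun h => by rw [h] at h2; simp at h2⟩
    · have h1' : 1 < z.re := h1
      refine ⟨by linarith, fun h => by rw [h] at h1'; norm_num at h1'⟩
    · exact ⟨h1, fun h => by rw [h] at h2; simp at h2⟩
  · intro z hre hne
    rcases lt_trichotomy z.re 1 with h | h | h
    · exact Or.inl (Or.inl (Or.inl ⟨hre, h⟩))
    · rcases lt_trichotomy z.im 0 with h2 | h2 | h2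
      · exact Or.inr ⟨hre, h2⟩
      · exfalso; exact hne (Complex.ext (by simp [h]) (by simp [h2]))
      · exact Or.inl (Or.inl (Or.inr ⟨hre, h2⟩))
    · exact Or.inl (Or.inr h)
  · left; right
    norm_num [hS2]

theorem zeta_eq_p_two_series (s : ℂ) (hs : -1 < s.re) (hs1 : s ≠ 1) :
    riemannZeta s =
      1 / (s - 1) + 1 / 2 +
        (1 / 2) * ∑' k : ℕ, (((k : ℂ) + 2) - 1) * (ascPochhammer ℂ (k + 2)).eval s /
          ((k + 3).factorial : ℂ) * (riemannZeta (s + ((k : ℂ) + 2)) - 1) := by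
  obtain ⟨V, hVopen, hVpre, hVprop, hVmem, h2V⟩ := V_facts
  set g : ℂ → ℂ := fun z ↦ riemannZeta z - (1 / (z - 1) + 1 / 2 +
    (1 / 2) * ∑' k : ℕ, (((k : ℂ) + 2) - 1) * (ascPochhammer ℂ (k + 2)).eval z /
      ((k + 3).factorial : ℂ) * (riemannZeta (z + ((k : ℂ) + 2)) - 1)) with hg
  have hdiff : DifferentiableOn ℂ g V := by
    intro z hzV
    obtain ⟨hz1, hz2⟩ := hVprop z hzV
    apply DifferentiableAt.differentiableWithinAt
    apply DifferentiableAt.sub (differentiableAt_riemannZeta hz2)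
    apply DifferentiableAt.add
    apply DifferentiableAt.add
    · have hzz : z - 1 ≠ 0 := sub_ne_zero.mpr hz2
      exact (differentiableAt_const _).div (differentiableAt_id.sub_const 1) hzz
    · exact differentiableAt_const _
    · exact (Tfun_diffAt hz1).const_mul _
  have hanalytic : AnalyticOnNhd ℂ g V := hdiff.analyticOnNhd hVopen
  have hopen1 : IsOpen {z : ℂ | 1 < z.re} := isOpen_lt continuous_const Complex.continuous_re
  have hzero : g =ᶠ[𝓝 2] 0 := by
    have h2mem : (2:ℂ) ∈ {z : ℂ | 1 < z.re} := by simp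
    filter_upwards [hopen1.mem_nhds h2mem] with z hz
    simp only [hg, Pi.zero_apply]
    rw [sub_eq_zero]
    exact main_gt_one z hz
  have heq := hanalytic.eqOn_zero_of_preconnected_of_eventuallyEq_zero hVpre h2V hzero
  have hthis := heq (hVmem s hs hs1)
  simp only [hg, Pi.zero_apply] at hthis
  exact sub_eq_zero.mp hthis
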